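/- For every non-negative integer n and integer t, ∑_{k=0}^{n} (-1)^{n-k}·C(n+k, n-k)·F_{2k+t} equals F_t if n ≡ 0 (mod 5); equals F_{t+1} if n ≡ 1 (mod 5); equals 0 if n ≡ 2 (mod 5); equals -F_{t+1} if n ≡ 3 (mod 5); and equals -F_t if n ≡ 4 (mod 5). -/

import Mathlib

open Finset Real

/-- Fibonacci numbers extended to integer indices. -/
def fibZ (n : ℤ) : ℤ :=
  if 0 ≤ n then (Nat.fib n.toNat : ℤ)
  else (-1) ^ ((-n).toNat + 1) * (Nat.fib (-n).toNat : ℤ)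

/-- Lucas numbers on natural indices. -/
def lucasNat : ℕ → ℤ
  | 0 => 2
  | 1 => 1
  | n + 2 => lucasNat (n + 1) + lucasNat n

/-- Lucas numbers extended to integer indices. -/
def lucasZ (n : ℤ) : ℤ :=
  if 0 ≤ n then lucasNat n.toNat
  else (-1) ^ (-n).toNat * lucasNat (-n).toNat

noncomputable def gold : ℝ := (1 + Real.sqrt 5) / 2
noncomputable def gold' : ℝ := (1 - Real.sqrt 5) / 2

lemma fibZ_rec (t : ℤ) : fibZ (t + 2) = fibZ (t + 1) + fibZ t := by
  rcases le_or_gt 0 t with h | h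
  · rw [fibZ, fibZ, fibZ, if_pos (by omega), if_pos (by omega), if_pos (by omega)]
    have h1 : (t+2).toNat = t.toNat + 2 := by omega
    have h2 : (t+1).toNat = t.toNat + 1 := by omega
    rw [h1, h2, Nat.fib_add_two]
    push_cast; ring
  · rcases eq_or_lt_of_le (by omega : t ≤ -1) with h1 | h1
    · subst h1; decide
    rcases eq_or_lt_of_le (by omega : t ≤ -2) with h2 | h2
    · subst h2; decide
    -- t ≤ -3
    obtain ⟨m, hm⟩ : ∃ m : ℕ, t = -((m:ℤ) + 3) := ⟨(-t).toNat - 3, by omega⟩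
    subst hm
    rw [fibZ, fibZ, fibZ, if_neg (by omega), if_neg (by omega), if_neg (by omega)]
    have h1 : (-(-((m:ℤ)+3) + 2)).toNat = m + 1 := by omega
    have h2 : (-(-((m:ℤ)+3) + 1)).toNat = m + 2 := by omega
    have h3 : (- -((m:ℤ)+3)).toNat = m + 3 := by omega
    rw [h1, h2, h3, Nat.fib_add_two (n := m+1)]
    push_cast [pow_succ]
    ring

def cc (m k : ℕ) : ℤ := if k ≤ m then (-1)^(m-k) * (Nat.choose (m+k) (m-k) : ℤ) else 0

lemma choose_key (m a : ℕ) :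
    (Nat.choose (m+2) (a+2) : ℤ) + Nat.choose m a = Nat.choose m (a+2) + 2 * Nat.choose (m+1) (a+1) := by
  have h1 : Nat.choose (m+2) (a+2) = Nat.choose (m+1) (a+1) + Nat.choose (m+1) (a+2) := by
    rw [Nat.choose_succ_succ]
  have h2 : Nat.choose (m+1) (a+2) = Nat.choose m (a+1) + Nat.choose m (a+2) := by
    rw [Nat.choose_succ_succ]
  have h3 : Nat.choose (m+1) (a+1) = Nat.choose m a + Nat.choose m (a+1) := by
    rw [Nat.choose_succ_succ]
  push_cast [h1, h2, h3]; ring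

lemma cc_zero (n : ℕ) : cc (n+2) 0 = -2 * cc (n+1) 0 - cc n 0 := by
  simp only [cc, Nat.le_add_left, if_pos, Nat.zero_le, Nat.sub_zero, Nat.add_zero,
    Nat.choose_self, pow_succ]
  push_cast; ring

lemma cc_rec (n k : ℕ) : cc (n+2) (k+1) = cc (n+1) k - 2 * cc (n+1) (k+1) - cc n (k+1) := by
  rcases le_or_gt (k+1) n with h | h
  · -- k+1 ≤ n : all guards true
    obtain ⟨j, rfl⟩ : ∃ j, n = k + 1 + j := ⟨n - (k+1), by omega⟩
    simp only [cc, if_pos (by omega : k + 1 ≤ k+1+j+2), if_pos (by omega : k ≤ k+1+j+1),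
      if_pos (by omega : k + 1 ≤ k+1+j+1), if_pos (by omega : k + 1 ≤ k+1+j)]
    have e1 : k+1+j+2 - (k+1) = j + 2 := by omega
    have e2 : k+1+j+1 - k = j + 2 := by omega
    have e3 : k+1+j+1 - (k+1) = j + 1 := by omega
    have e4 : k+1+j - (k+1) = j := by omega
    have e5 : k+1+j+2 + (k+1) = (2*k+j+2) + 2 := by omega
    have e6 : k+1+j+1 + k = 2*k+j+2 := by omega
    have e7 : k+1+j+1 + (k+1) = (2*k+j+2) + 1 := by omega
    have e8 : k+1+j + (k+1) = 2*k+j+2 := by omega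
    rw [e1, e2, e3, e4, e5, e6, e7, e8]
    have key := choose_key (2*k+j+2) j
    rw [pow_succ, pow_succ]
    linear_combination ((-1:ℤ)^j) * key
  rcases eq_or_lt_of_le (by omega : n ≤ k) with h1 | h1
  · -- k = n
    obtain rfl : k = n := h1.symm
    simp only [cc, if_pos (by omega : k+1 ≤ k+2), if_pos (by omega : k ≤ k+1),
      if_pos (by omega : k+1 ≤ k+1), if_neg (by omega : ¬ (k+1 ≤ k))]
    have e1 : k+2 - (k+1) = 1 := by omega
    have e2 : k+1 - k = 1 := by omega
    have e3 : k+1 - (k+1) = 0 := by omega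
    rw [e1, e2, e3]
    have e5 : k+2 + (k+1) = 2*k+3 := by omega
    have e6 : k+1+k = 2*k+1 := by omega
    have e7 : k+1+(k+1) = 2*k+2 := by omega
    rw [e5, e6, e7, Nat.choose_one_right, Nat.choose_one_right, Nat.choose_zero_right]
    push_cast; ring
  rcases eq_or_lt_of_le (by omega : n + 1 ≤ k) with h2 | h2
  · -- k = n+1
    have : k = n + 1 := by omega
    subst this
    simp only [cc, if_pos (by omega : n+1+1 ≤ n+2), if_pos (by omega : n+1 ≤ n+1),
      if_neg (by omega : ¬ (n+1+1 ≤ n+1)), if_neg (by omega : ¬ (n+1+1 ≤ n))]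
    have e1 : n+2 - (n+1+1) = 0 := by omega
    have e2 : n+1 - (n+1) = 0 := by omega
    rw [e1, e2, Nat.choose_zero_right, Nat.choose_zero_right]
    ring
  · -- k ≥ n+2
    simp only [cc, if_neg (by omega : ¬ (k+1 ≤ n+2)), if_neg (by omega : ¬ (k ≤ n+1)),
      if_neg (by omega : ¬ (k+1 ≤ n+1)), if_neg (by omega : ¬ (k+1 ≤ n))]
    ring

def S (n : ℕ) (t : ℤ) : ℤ := ∑ k ∈ Finset.range (n+1), cc n k * fibZ (2*k + t)

lemma S_pad (n N : ℕ) (h : n < N) (t : ℤ) :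
    S n t = ∑ k ∈ Finset.range N, cc n k * fibZ (2*k + t) := by
  rw [S]
  apply Finset.sum_subset
  · intro x hx; simp only [Finset.mem_range] at *; omega
  · intro x hx hx2
    simp only [Finset.mem_range] at *
    have : ¬ (x ≤ n) := by omega
    rw [cc, if_neg this, zero_mul]

lemma S_rec (n : ℕ) (t : ℤ) :
    S (n+2) t = S (n+1) (t+2) - 2 * S (n+1) t - S n t := by
  have hshift : S (n+1) (t+2) =
      ∑ k ∈ Finset.range (n+3), (if k = 0 then 0 else cc (n+1) (k-1)) * fibZ (2*k + t) := by
    rw [Finset.sum_range_succ' (fun k => (if k = 0 then 0 else cc (n+1) (k-1)) * fibZ (2*k + t)) (n+2)]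
    have h0 : (if (0:ℕ) = 0 then (0:ℤ) else cc (n+1) (0-1)) * fibZ (2*(0:ℕ) + t) = 0 := by
      simp
    rw [h0, add_zero, S]
    apply Finset.sum_congr rfl
    intro k _
    rw [if_neg (Nat.succ_ne_zero k), Nat.add_sub_cancel]
    congr 1
    push_cast; ring
  have key : ∀ k ∈ Finset.range (n+3), cc (n+2) k * fibZ (2*k+t) =
      (if k = 0 then 0 else cc (n+1) (k-1)) * fibZ (2*k+t)
        - 2 * (cc (n+1) k * fibZ (2*k+t)) - cc n k * fibZ (2*k+t) := by
    intro k _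
    rcases k with _ | j
    · rw [if_pos rfl, zero_mul, show (2*((0:ℕ):ℤ) + t) = t from by push_cast; ring]
      linear_combination fibZ t * cc_zero n
    · rw [if_neg (Nat.succ_ne_zero j), Nat.add_sub_cancel]
      push_cast
      linear_combination fibZ (2*((j:ℤ)+1) + t) * cc_rec n j
  rw [hshift, S_pad n (n+3) (by omega), S_pad (n+1) (n+3) (by omega), S,
    show n+2+1 = n+3 from rfl, Finset.sum_congr rfl key,
    Finset.sum_sub_distrib, Finset.sum_sub_distrib, ← Finset.mul_sum]

def R (n : ℕ) (t : ℤ) : ℤ :=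
  if n % 5 = 0 then fibZ t
  else if n % 5 = 1 then fibZ (t + 1)
  else if n % 5 = 2 then 0
  else if n % 5 = 3 then -fibZ (t + 1)
  else -fibZ t

lemma R_rec (n : ℕ) (t : ℤ) :
    R (n+2) t = R (n+1) (t+2) - 2 * R (n+1) t - R n t := by
  have f2 := fibZ_rec t
  have h23 : fibZ (t+3) = fibZ (t+2) + fibZ (t+1) := by
    have h := fibZ_rec (t+1)
    rw [show t+1+2 = t+3 from by ring, show t+1+1 = t+2 from by ring] at h
    exact h
  have h24 : fibZ (t+2+1) = fibZ (t+2) + fibZ (t+1) := by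
    rw [show t+2+1 = t+1+2 from by ring, fibZ_rec (t+1), show t+1+1 = t+2 from by ring]
  have h5 : n % 5 < 5 := Nat.mod_lt _ (by norm_num)
  interval_cases h : n % 5 <;>
    simp only [R, show (n+2) % 5 = (n % 5 + 2) % 5 from by omega,
      show (n+1) % 5 = (n % 5 + 1) % 5 from by omega, h] <;>
    norm_num <;> linarith [f2, h23, h24]

lemma S_eq_R (n : ℕ) : ∀ t : ℤ, S n t = R n t := by
  induction n using Nat.strong_induction_on with
  | _ n ih =>
    match n with
    | 0 =>
      intro t
      rw [S, R]
      norm_num [cc, show (2:ℤ)*((0:ℕ):ℤ) + t = t from by push_cast; ring]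
    | 1 =>
      intro t
      have hR : R 1 t = fibZ (t+1) := by rw [R]; norm_num
      rw [S, hR, Finset.sum_range_succ, Finset.sum_range_succ, Finset.sum_range_zero]
      have c0 : cc 1 0 = -1 := by simp [cc]
      have c1 : cc 1 1 = 1 := by simp [cc]
      rw [c0, c1, show (2:ℤ)*((0:ℕ):ℤ) + t = t from by push_cast; ring,
        show (2:ℤ)*((1:ℕ):ℤ) + t = t + 2 from by push_cast; ring, fibZ_rec t]
      ring
    | (m+2) =>
      intro t
      rw [S_rec]
      simp only [ih (m+1) (by omega), ih m (by omega)]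
      rw [R_rec]

theorem stmt18 (n : ℕ) (t : ℤ) :
    ∑ k ∈ Finset.range (n + 1),
        (-1 : ℤ) ^ (n - k) * (Nat.choose (n + k) (n - k) : ℤ) * fibZ (2 * k + t) =
      if n % 5 = 0 then fibZ t
      else if n % 5 = 1 then fibZ (t + 1)
      else if n % 5 = 2 then 0
      else if n % 5 = 3 then -fibZ (t + 1)
      else -fibZ t := by
  have h1 : (∑ k ∈ Finset.range (n + 1),
      (-1 : ℤ) ^ (n - k) * (Nat.choose (n + k) (n - k) : ℤ) * fibZ (2 * k + t)) = S n t := by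
    apply Finset.sum_congr rfl
    intro k hk
    rw [Finset.mem_range] at hk
    rw [cc, if_pos (by omega : k ≤ n)]
  rw [h1, S_eq_R n t, R]
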